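/- In a free product A * B of groups with |A| ≥ 2 and B infinite cyclic generated by b, for any a ∈ A \ {1} the subgroup generated by b and a·b·a⁻¹ is free of rank 2. -/

import Mathlib

open Monoid CoprodI Pointwise

universe u v

/-- Index family for the binary free product viewed as `CoprodI`. -/
@[reducible] def MX (A : Type u) (B : Type v) : Bool → Type (max u v) :=
  fun i => cond i (ULift.{u} B) (ULift.{v} A)

instance {A : Type u} {B : Type v} [Group A] [Group B] (i : Bool) : Group (MX A B i) :=
  i.rec (inferInstanceAs (Group (ULift.{v} A))) (inferInstanceAs (Group (ULift.{u} B)))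

section Aux

variable {G : Bool → Type u} [∀ i, Group (G i)] [∀ i, DecidableEq (G i)]

/-- The exponent of the `true`-head of the normal form of an element of a free product. -/
noncomputable def hdf (e : G true → ℤ) (g : CoprodI G) : ℤ :=
  e ((Word.equivPair true (Word.equiv g)).head)

theorem equiv_mul (x g : CoprodI G) : Word.equiv (x * g) = x • Word.equiv g := by
  show Word.equiv.toFun (x * g) = x • Word.equiv.toFun g
  simp only [Word.equiv]
  rw [mul_smul]

theorem hdf_one (e : G true → ℤ) (he0 : e 1 = 0) : hdf e (1 : CoprodI G) = 0 := by
  have h1 : Word.equiv (1 : CoprodI G) = Word.empty := by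
    show Word.equiv.toFun (1 : CoprodI G) = Word.empty
    simp only [Word.equiv]
    rw [one_smul]
  have h2 : Word.fstIdx (Word.empty : Word G) ≠ some true := by
    simp [Word.fstIdx, Word.empty]
  unfold hdf
  rw [h1, Word.equivPair_eq_of_fstIdx_ne h2]
  exact he0

theorem hdf_of_mul (e : G true → ℤ) (he : ∀ x y, e (x * y) = e x + e y)
    (y : G true) (g : CoprodI G) :
    hdf e (CoprodI.of y * g) = e y + hdf e g := by
  unfold hdf
  rw [equiv_mul, Word.equivPair_smul_same]
  exact he _ _

theorem hdf_false_mul (e : G true → ℤ) (he0 : e 1 = 0)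
    (m : G false) (hm : m ≠ 1) (g : CoprodI G) (hg : hdf e g ≠ 0) :
    hdf e (CoprodI.of m * g) = 0 := by
  set w := Word.equiv g with hw
  have hhead : (Word.equivPair true w).head ≠ 1 := by
    intro h
    exact hg (by unfold hdf; rw [← hw, h]; exact he0)
  have hfst : Word.fstIdx w = some true := by
    by_contra hne
    rw [Word.equivPair_eq_of_fstIdx_ne hne] at hhead
    exact hhead rfl
  have hne' : Word.fstIdx w ≠ some false := by rw [hfst]; simp
  have hsm : CoprodI.of m • w = Word.cons m w hne' hm := by
    rw [Word.of_smul_def, Word.equivPair_eq_of_fstIdx_ne hne']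
    simp [Word.rcons, hm]
  have hfst2 : Word.fstIdx (CoprodI.of m • w) ≠ some true := by
    rw [hsm, Word.fstIdx_cons]; simp
  unfold hdf
  rw [equiv_mul, ← hw, Word.equivPair_eq_of_fstIdx_ne hfst2]
  exact he0

set_option maxHeartbeats 1000000 in
theorem aux {G : Bool → Type u} [∀ i, Group (G i)]
    (b' : G true) (e : G true → ℤ)
    (he : ∀ x y, e (x * y) = e x + e y) (heb : e b' = 1)
    (he1 : ∀ x : G true, e x = 0 → x = 1)
    (a' : G false) (ha : a' ≠ 1) :
    Function.Injective (FreeGroup.lift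
      ![CoprodI.of b', CoprodI.of a' * CoprodI.of b' * (CoprodI.of a')⁻¹]
      : FreeGroup (Fin 2) →* CoprodI G) := by
  classical
  have he0 : e 1 = 0 := by
    have := he 1 1
    simp only [mul_one] at this
    linarith
  have heinv : ∀ x : G true, e x⁻¹ = - e x := by
    intro x
    have := he x x⁻¹
    simp only [mul_inv_cancel, he0] at this
    linarith
  have hane : ∀ x : G true, x ≠ 1 → e x ≠ 0 := fun x hx h => hx (he1 x h)
  set c : CoprodI G := CoprodI.of a' with hc
  set X0 : Set (CoprodI G) := {g | 0 < hdf e g} with hX0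
  set Y0 : Set (CoprodI G) := {g | hdf e g < 0} with hY0
  -- elements of c • X0 and c • Y0 have hdf = 0
  have hmemX1 : ∀ g ∈ c • X0, hdf e g = 0 := by
    rintro _ ⟨g', hg', rfl⟩
    show hdf e (c * g') = 0
    exact hdf_false_mul e he0 a' ha g' (by have : 0 < hdf e g' := hg'; omega)
  have hmemY1 : ∀ g ∈ c • Y0, hdf e g = 0 := by
    rintro _ ⟨g', hg', rfl⟩
    show hdf e (c * g') = 0
    exact hdf_false_mul e he0 a' ha g' (by have : hdf e g' < 0 := hg'; omega)
  have hdXY : Disjoint X0 Y0 := by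
    rw [Set.disjoint_left]
    intro g hg hg'
    have h1 : 0 < hdf e g := hg
    have h2 : hdf e g < 0 := hg'
    omega
  suffices h : (∀ i, ((![X0, c • X0] : Fin 2 → Set (CoprodI G)) i).Nonempty) ∧
      Pairwise (Function.onFun Disjoint (![X0, c • X0] : Fin 2 → Set (CoprodI G))) ∧
      Pairwise (Function.onFun Disjoint (![Y0, c • Y0] : Fin 2 → Set (CoprodI G))) ∧
      (∀ i j, Disjoint ((![X0, c • X0] : Fin 2 → Set (CoprodI G)) i)
        ((![Y0, c • Y0] : Fin 2 → Set (CoprodI G)) j)) ∧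
      (∀ i, (![CoprodI.of b', c * CoprodI.of b' * c⁻¹] : Fin 2 → CoprodI G) i •
        ((![Y0, c • Y0] : Fin 2 → Set (CoprodI G)) i)ᶜ ⊆ (![X0, c • X0] : Fin 2 → Set (CoprodI G)) i) ∧
      (∀ i, (![CoprodI.of b', c * CoprodI.of b' * c⁻¹] : Fin 2 → CoprodI G)⁻¹ i •
        ((![X0, c • X0] : Fin 2 → Set (CoprodI G)) i)ᶜ ⊆ (![Y0, c • Y0] : Fin 2 → Set (CoprodI G)) i) by
    obtain ⟨h1, h2, h3, h4, h5, h6⟩ := h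
    have hdown : ∀ {i j : ULift.{u} (Fin 2)}, i ≠ j → i.down ≠ j.down := by
      intro i j hij h
      exact hij (by cases i; cases j; cases h; rfl)
    have hUinj : Function.Injective (FreeGroup.lift
        (fun i : ULift.{u} (Fin 2) =>
          (![CoprodI.of b', c * CoprodI.of b' * c⁻¹] : Fin 2 → CoprodI G) i.down)) :=
      FreeGroup.injective_lift_of_ping_pong
        (fun i : ULift.{u} (Fin 2) =>
          (![CoprodI.of b', c * CoprodI.of b' * c⁻¹] : Fin 2 → CoprodI G) i.down)
        (fun i : ULift.{u} (Fin 2) => (![X0, c • X0] : Fin 2 → Set (CoprodI G)) i.down)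
        (fun i : ULift.{u} (Fin 2) => (![Y0, c • Y0] : Fin 2 → Set (CoprodI G)) i.down)
        (fun i => h1 i.down)
        (fun i j hij => h2 (hdown hij))
        (fun i j hij => h3 (hdown hij))
        (fun i j => h4 i.down j.down)
        (fun i => h5 i.down)
        (fun i => h6 i.down)
    have hcomp2 : (FreeGroup.lift
        (fun i : ULift.{u} (Fin 2) =>
          (![CoprodI.of b', c * CoprodI.of b' * c⁻¹] : Fin 2 → CoprodI G) i.down)).comp
        (FreeGroup.freeGroupCongr (Equiv.ulift.{u, 0} (α := Fin 2)).symm).toMonoidHom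
        = FreeGroup.lift (![CoprodI.of b', c * CoprodI.of b' * c⁻¹] : Fin 2 → CoprodI G) := by
      ext i
      simp
    rw [← hcomp2, MonoidHom.coe_comp]
    exact Function.Injective.comp hUinj
      (FreeGroup.freeGroupCongr (Equiv.ulift.{u, 0} (α := Fin 2)).symm).injective
  refine ⟨?_, ?_, ?_, ?_, ?_, ?_⟩
  · -- nonempty
    have hb0 : hdf e (CoprodI.of b') = 1 := by
      have := hdf_of_mul e he b' 1
      rw [mul_one] at this
      rw [this, hdf_one e he0, heb]
      norm_num
    intro i
    fin_cases i
    · exact ⟨CoprodI.of b', show 0 < hdf e (CoprodI.of b') by rw [hb0]; norm_num⟩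
    · exact ⟨c • CoprodI.of b',
        Set.smul_mem_smul_set (show 0 < hdf e (CoprodI.of b') by rw [hb0]; norm_num)⟩
  · -- X pairwise disjoint
    intro i j hij
    fin_cases i <;> fin_cases j <;> simp only [Fin.mk_zero, Fin.mk_one, ne_eq] at hij ⊢
    · exact absurd trivial hij
    · show Disjoint X0 (c • X0)
      rw [Set.disjoint_left]
      intro g hg hg'
      have h1 : 0 < hdf e g := hg
      have h2 := hmemX1 g hg'
      omega
    · show Disjoint (c • X0) X0
      rw [Set.disjoint_left]
      intro g hg hg'
      have h1 : 0 < hdf e g := hg'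
      have h2 := hmemX1 g hg
      omega
    · exact absurd trivial hij
  · -- Y pairwise disjoint
    intro i j hij
    fin_cases i <;> fin_cases j <;> simp only [Fin.mk_zero, Fin.mk_one, ne_eq] at hij ⊢
    · exact absurd trivial hij
    · show Disjoint Y0 (c • Y0)
      rw [Set.disjoint_left]
      intro g hg hg'
      have h1 : hdf e g < 0 := hg
      have h2 := hmemY1 g hg'
      omega
    · show Disjoint (c • Y0) Y0
      rw [Set.disjoint_left]
      intro g hg hg'
      have h1 : hdf e g < 0 := hg'
      have h2 := hmemY1 g hg
      omega
    · exact absurd trivial hij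
  · -- X i disjoint from Y j
    intro i j
    fin_cases i <;> fin_cases j
    · exact hdXY
    · show Disjoint X0 (c • Y0)
      rw [Set.disjoint_left]
      intro g hg hg'
      have h1 : 0 < hdf e g := hg
      have h2 := hmemY1 g hg'
      omega
    · show Disjoint (c • X0) Y0
      rw [Set.disjoint_left]
      intro g hg hg'
      have h1 : hdf e g < 0 := hg'
      have h2 := hmemX1 g hg
      omega
    · show Disjoint (c • X0) (c • Y0)
      rw [Set.disjoint_left]
      rintro _ ⟨g1, hg1, rfl⟩ ⟨g2, hg2, heq⟩
      have : g2 = g1 := smul_left_cancel c heq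
      subst this
      have h1 : 0 < hdf e g2 := hg1
      have h2 : hdf e g2 < 0 := hg2
      omega
  · -- ping : a i • (Y i)ᶜ ⊆ X i
    intro i
    fin_cases i
    · simp only [Matrix.cons_val_zero]
      rintro _ ⟨g, hg, rfl⟩
      have hgY : ¬ hdf e g < 0 := hg
      show 0 < hdf e (CoprodI.of b' * g)
      rw [hdf_of_mul e he, heb]
      omega
    · simp only [Matrix.cons_val_one, Matrix.head_cons]
      rintro _ ⟨g, hg, rfl⟩
      have h1 : c⁻¹ * g ∉ Y0 := by
        intro hmem
        exact hg (⟨c⁻¹ * g, hmem, show c * (c⁻¹ * g) = g from mul_inv_cancel_left c g⟩)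
      have h2 : CoprodI.of b' * (c⁻¹ * g) ∈ X0 := by
        have hgY : ¬ hdf e (c⁻¹ * g) < 0 := h1
        show 0 < hdf e (CoprodI.of b' * (c⁻¹ * g))
        rw [hdf_of_mul e he, heb]
        omega
      refine ⟨CoprodI.of b' * (c⁻¹ * g), h2, ?_⟩
      show c * (CoprodI.of b' * (c⁻¹ * g)) = (c * CoprodI.of b' * c⁻¹) * g
      group
  · -- pong : a⁻¹ i • (X i)ᶜ ⊆ Y i
    intro i
    fin_cases i
    · simp only [Matrix.cons_val_zero, Pi.inv_apply]
      rintro _ ⟨g, hg, rfl⟩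
      have hgX : ¬ 0 < hdf e g := hg
      show hdf e ((CoprodI.of b')⁻¹ * g) < 0
      rw [← map_inv, hdf_of_mul e he, heinv, heb]
      omega
    · simp only [Matrix.cons_val_one, Matrix.head_cons, Pi.inv_apply]
      rintro _ ⟨g, hg, rfl⟩
      have h1 : c⁻¹ * g ∉ X0 := by
        intro hmem
        exact hg (⟨c⁻¹ * g, hmem, show c * (c⁻¹ * g) = g from mul_inv_cancel_left c g⟩)
      have h2 : (CoprodI.of b')⁻¹ * (c⁻¹ * g) ∈ Y0 := by
        have hgX : ¬ 0 < hdf e (c⁻¹ * g) := h1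
        show hdf e ((CoprodI.of b')⁻¹ * (c⁻¹ * g)) < 0
        rw [← map_inv, hdf_of_mul e he, heinv, heb]
        omega
      refine ⟨(CoprodI.of b')⁻¹ * (c⁻¹ * g), h2, ?_⟩
      show c * ((CoprodI.of b')⁻¹ * (c⁻¹ * g)) = (c * CoprodI.of b' * c⁻¹)⁻¹ * g
      group

end Aux

/-- In a free product `Monoid.Coprod A B` with `|A| ≥ 2` and `B` infinite cyclic generated by `b`,
for any `a ∈ A \ {1}` the elements `b` and `a b a⁻¹` generate a free group of rank 2. -/
theorem stmt11 {A B : Type*} [Group A] [Nontrivial A] [Group B]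
    (b : B) (hb : ∀ x : B, x ∈ Subgroup.zpowers b) (hBinf : Infinite B)
    (a : A) (ha : a ≠ 1) :
    Function.Injective (FreeGroup.lift
      ![(Monoid.Coprod.inr b : Monoid.Coprod A B),
        Monoid.Coprod.inl a * Monoid.Coprod.inr b * (Monoid.Coprod.inl a)⁻¹]
      : FreeGroup (Fin 2) →* Monoid.Coprod A B) := by
  classical
  -- b has infinite order, so the zpow map is injective
  have hb_inj : Function.Injective (fun n : ℤ => b ^ n) := by
    rw [injective_zpow_iff_not_isOfFinOrder]
    intro hfin
    have hfinite : (Subgroup.zpowers b : Set B).Finite := hfin.finite_zpowers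
    have : (Set.univ : Set B).Finite := hfinite.subset (fun x _ => hb x)
    exact Set.infinite_univ this
  choose e' he' using fun x => Subgroup.mem_zpowers_iff.mp (hb x)
  have hadd : ∀ x y : B, e' (x * y) = e' x + e' y := by
    intro x y
    apply hb_inj
    show b ^ e' (x * y) = b ^ (e' x + e' y)
    rw [he', zpow_add, he', he']
  have heb : e' b = 1 := by
    apply hb_inj
    show b ^ e' b = b ^ (1 : ℤ)
    rw [he', zpow_one]
  have he1 : ∀ x : B, e' x = 0 → x = 1 := by
    intro x hx
    have := he' x
    rw [hx, zpow_zero] at this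
    exact this.symm
  -- the comparison homomorphism to the indexed free product
  let φ : Monoid.Coprod A B →* CoprodI (MX A B) :=
    Monoid.Coprod.lift
      ((CoprodI.of (M := MX A B) (i := false)).comp (MulEquiv.ulift.symm.toMonoidHom))
      ((CoprodI.of (M := MX A B) (i := true)).comp (MulEquiv.ulift.symm.toMonoidHom))
  set b' : MX A B true := ULift.up b with hb'
  set a' : MX A B false := ULift.up a with ha'
  have ha'1 : a' ≠ 1 := fun h => ha (congrArg ULift.down h)
  have hcomp : φ.comp (FreeGroup.lift
      ![(Monoid.Coprod.inr b : Monoid.Coprod A B),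
        Monoid.Coprod.inl a * Monoid.Coprod.inr b * (Monoid.Coprod.inl a)⁻¹])
      = FreeGroup.lift ![CoprodI.of b', CoprodI.of a' * CoprodI.of b' * (CoprodI.of a')⁻¹] := by
    ext i
    fin_cases i <;>
      simp [φ, b', a', Monoid.Coprod.lift_apply_inl, Monoid.Coprod.lift_apply_inr,
        MulEquiv.ulift, Equiv.ulift]
  have hinj : Function.Injective
      (FreeGroup.lift ![CoprodI.of b', CoprodI.of a' * CoprodI.of b' * (CoprodI.of a')⁻¹]
        : FreeGroup (Fin 2) →* CoprodI (MX A B)) :=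
    aux b' (fun x => e' x.down)
      (fun x y => hadd x.down y.down) heb (fun x hx => by
        have := he1 x.down hx
        exact ULift.ext _ _ this) a' ha'1
  apply Function.Injective.of_comp (f := ⇑φ)
  have : ⇑φ ∘ ⇑(FreeGroup.lift
      ![(Monoid.Coprod.inr b : Monoid.Coprod A B),
        Monoid.Coprod.inl a * Monoid.Coprod.inr b * (Monoid.Coprod.inl a)⁻¹])
      = ⇑(FreeGroup.lift ![CoprodI.of b', CoprodI.of a' * CoprodI.of b' * (CoprodI.of a')⁻¹]) := by
    rw [← MonoidHom.coe_comp, hcomp]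
  rw [this]
  exact hinj
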